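/- Let v₁ = (0,0,0), v₂ = (1000,0,0), v₃ = (259,671,0), v₄ = (588,−242,241), v₅ = (−54,149,−419), v₆ = (534,66,386), v₇ = (718,9,−596), v₈ = (350,695,32), v₉ = (−23,−222,−111), v₁₀ = (−70,338,−938) in ℝ³, and define edge vectors eᵢ = v_{i+1} − vᵢ for i = 1, …, 9 and e₁₀ = v₁ − v₁₀. Then there is no w ∈ ℝ³ such that (−1)^{i+1} (w · eᵢ) > 0 for every i ∈ {1, …, 10}. -/

import Mathlib

/-- The vertices of the paper's 10-stick polygonal realization of the knot `9_20`.
Here `vert9_20 i` is the paper's vertex `v_(i+1)`. -/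
noncomputable def vert9_20 : Fin 10 → (Fin 3 → ℝ) :=
  ![![0, 0, 0], ![1000, 0, 0], ![259, 671, 0], ![588, -242, 241], ![-54, 149, -419], ![534, 66, 386], ![718, 9, -596], ![350, 695, 32], ![-23, -222, -111], ![-70, 338, -938]]

/-- The edge vectors `eᵢ = v_(i+1) − vᵢ` (cyclically, so `e₁₀ = v₁ − v₁₀`);
here `edge9_20 i` is the paper's `e_(i+1)`, using wrap-around addition on `Fin 10`. -/
noncomputable def edge9_20 (i : Fin 10) : Fin 3 → ℝ :=
  vert9_20 (i + 1) - vert9_20 i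

/-- There is no `w ∈ ℝ³` such that `(−1)^(i+1) (w · eᵢ) > 0` for every
`i ∈ {1, …, 10}`: no projection of this polygon (the knot `9_20`) to a line has
5 local maxima. (With 0-based indexing `i : Fin 10`, the sign is `(−1)^i`.) -/
theorem no_alternating_direction_9_20 :
    ¬ ∃ w : Fin 3 → ℝ, ∀ i : Fin 10,
        0 < (-1 : ℝ) ^ (i : ℕ) * ∑ j : Fin 3, w j * edge9_20 i j := by
  rintro ⟨w, h⟩
  have h0 := h 0
  have h2 := h 2
  have h5 := h 5
  have h9 := h 9
  simp only [Fin.sum_univ_three, edge9_20, Pi.sub_apply,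
    show ((0:Fin 10):ℕ) = 0 from rfl, show ((2:Fin 10):ℕ) = 2 from rfl,
    show ((5:Fin 10):ℕ) = 5 from rfl, show ((9:Fin 10):ℕ) = 9 from rfl,
    show (0:Fin 10) + 1 = 1 from rfl, show (2:Fin 10) + 1 = 3 from rfl,
    show (5:Fin 10) + 1 = 6 from rfl, show (9:Fin 10) + 1 = 0 from rfl,
    show vert9_20 0 = ![(0:ℝ), 0, 0] from rfl,
    show vert9_20 1 = ![(1000:ℝ), 0, 0] from rfl,
    show vert9_20 2 = ![(259:ℝ), 671, 0] from rfl,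
    show vert9_20 3 = ![(588:ℝ), -242, 241] from rfl,
    show vert9_20 4 = ![(-54:ℝ), 149, -419] from rfl,
    show vert9_20 5 = ![(534:ℝ), 66, 386] from rfl,
    show vert9_20 6 = ![(718:ℝ), 9, -596] from rfl,
    show vert9_20 7 = ![(350:ℝ), 695, 32] from rfl,
    show vert9_20 8 = ![(-23:ℝ), -222, -111] from rfl,
    show vert9_20 9 = ![(-70:ℝ), 338, -938] from rfl] at h0 h2 h5 h9
  norm_num [Matrix.cons_val_two, Matrix.tail_cons, Matrix.head_cons] at h0 h2 h5 h9
  linarith
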